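/- The V-polynomial has the spanning-subgraph state sum V(G) = Σ_{A ⊆ E(G)} x_{c_1} x_{c_2} ⋯ x_{c_{k(A)}} · ∏_{e∈A} γ_e, where k(A) is the number of connected components of the spanning subgraph (V(G), A) and c_l is the sum of the vertex weights in the l-th component. -/

import Mathlib

open Finset

structure WGraph (S : Type) (L : Type) where
  V : Type
  E : Type
  [fV : Fintype V]
  [dV : DecidableEq V]
  [fE : Fintype E]
  [dE : DecidableEq E]
  ends : E → V × V
  ω : V → S
  γ : E → L

attribute [instance] WGraph.fV WGraph.dV WGraph.fE WGraph.dE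

namespace WGraph
variable {S L : Type}

def IsLoop (G : WGraph S L) (e : G.E) : Prop := (G.ends e).1 = (G.ends e).2

def delete (G : WGraph S L) (e₀ : G.E) : WGraph S L where
  V := G.V
  E := {e : G.E // e ≠ e₀}
  ends := fun e => G.ends e.1
  ω := G.ω
  γ := fun e => G.γ e.1

def contract [Add S] (G : WGraph S L) (e₀ : G.E) (h : ¬ G.IsLoop e₀) : WGraph S L where
  V := {v : G.V // v ≠ (G.ends e₀).2}
  E := {e : G.E // e ≠ e₀}
  ends := fun e =>
    ((if hv : (G.ends e.1).1 = (G.ends e₀).2 then ⟨(G.ends e₀).1, h⟩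
        else ⟨(G.ends e.1).1, hv⟩ : {v : G.V // v ≠ (G.ends e₀).2}),
     (if hv : (G.ends e.1).2 = (G.ends e₀).2 then ⟨(G.ends e₀).1, h⟩
        else ⟨(G.ends e.1).2, hv⟩))
  ω := fun v =>
    if v.1 = (G.ends e₀).1 then G.ω (G.ends e₀).1 + G.ω (G.ends e₀).2 else G.ω v.1
  γ := fun e => G.γ e.1

def mapEdges {L' : Type} (G : WGraph S L) (φ : L → L') : WGraph S L' where
  V := G.V
  E := G.E
  ends := G.ends
  ω := G.ω
  γ := φ ∘ G.γ

def stateGraph (G : WGraph S L) (A : Finset G.E) : SimpleGraph G.V :=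
  SimpleGraph.fromRel (fun v w => ∃ e ∈ A, G.ends e = (v, w))

noncomputable instance (G : WGraph S L) (A : Finset G.E) :
    Fintype (G.stateGraph A).ConnectedComponent := Fintype.ofFinite _

noncomputable def kcomp (G : WGraph S L) (A : Finset G.E) : ℕ :=
  Fintype.card (G.stateGraph A).ConnectedComponent

open scoped Classical in
noncomputable def compWeight [AddCommMonoid S] (G : WGraph S L) (A : Finset G.E)
    (c : (G.stateGraph A).ConnectedComponent) : S :=
  ∑ v ∈ Finset.univ.filter (fun v => (G.stateGraph A).connectedComponentMk v = c), G.ω v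

end WGraph

/- ---------------- auxiliary material ---------------- -/

open SimpleGraph

section Aux
variable {S : Type} [AddCommMonoid S] {R : Type} [CommRing R]

open scoped Classical in
noncomputable def wsum {V : Type} [Fintype V] (H : SimpleGraph V) (ω : V → S)
    (c : H.ConnectedComponent) : S :=
  ∑ v ∈ Finset.univ.filter (fun v => H.connectedComponentMk v = c), ω v

lemma mk_eq_of_reachable {V V' : Type} {H : SimpleGraph V} {H' : SimpleGraph V'} {f : V → V'}
    (hf : ∀ v w, H.Adj v w → H'.Reachable (f v) (f w)) :
    ∀ {v w}, H.Reachable v w →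
      H'.connectedComponentMk (f v) = H'.connectedComponentMk (f w) := by
  rintro v w ⟨p⟩
  induction p with
  | nil => rfl
  | cons h p ih => exact (ConnectedComponent.sound (hf _ _ h)).trans ih

noncomputable def compEquiv {V V' : Type} (H : SimpleGraph V) (H' : SimpleGraph V')
    (f : V → V') (g : V' → V)
    (hf : ∀ v w, H.Adj v w → H'.Reachable (f v) (f w))
    (hg : ∀ v w, H'.Adj v w → H.Reachable (g v) (g w))
    (hgf : ∀ v, H.Reachable (g (f v)) v)
    (hfg : ∀ v', H'.Reachable (f (g v')) v') :
    H.ConnectedComponent ≃ H'.ConnectedComponent where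
  toFun := ConnectedComponent.lift (fun v => H'.connectedComponentMk (f v))
    (fun v w p _ => mk_eq_of_reachable hf ⟨p⟩)
  invFun := ConnectedComponent.lift (fun v' => H.connectedComponentMk (g v'))
    (fun v w p _ => mk_eq_of_reachable hg ⟨p⟩)
  left_inv := ConnectedComponent.ind (fun v => ConnectedComponent.sound (hgf v))
  right_inv := ConnectedComponent.ind (fun v' => ConnectedComponent.sound (hfg v'))

lemma prod_wsum_transfer {V V' : Type} [Fintype V] [Fintype V']
    (H : SimpleGraph V) (H' : SimpleGraph V')
    [Fintype H.ConnectedComponent] [Fintype H'.ConnectedComponent]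
    (ω : V → S) (ω' : V' → S) (x : S → R)
    (f : V → V') (g : V' → V)
    (hf : ∀ v w, H.Adj v w → H'.Reachable (f v) (f w))
    (hg : ∀ v w, H'.Adj v w → H.Reachable (g v) (g w))
    (hgf : ∀ v, H.Reachable (g (f v)) v)
    (hfg : ∀ v', H'.Reachable (f (g v')) v')
    (hw : ∀ v : V, wsum H ω (H.connectedComponentMk v) =
        wsum H' ω' (H'.connectedComponentMk (f v))) :
    ∏ c, x (wsum H ω c) = ∏ c', x (wsum H' ω' c') := by
  refine Fintype.prod_equiv (compEquiv H H' f g hf hg hgf hfg) _ _ ?_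
  exact ConnectedComponent.ind (fun v => congrArg x (hw v))

lemma prod_wsum_congr {V : Type} [Fintype V] (H H' : SimpleGraph V)
    [i1 : Fintype H.ConnectedComponent] [i2 : Fintype H'.ConnectedComponent]
    (ω : V → S) (x : S → R) (hH : H = H') :
    ∏ c, x (wsum H ω c) = ∏ c', x (wsum H' ω c') := by
  subst hH
  have hi : i1 = i2 := Subsingleton.elim _ _
  subst hi
  rfl

lemma compWeight_eq_wsum (G : WGraph S R) (A : Finset G.E)
    (c : (G.stateGraph A).ConnectedComponent) :
    G.compWeight A c = wsum (G.stateGraph A) G.ω c := rfl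

/-- splitting the sum over all subsets according to membership of `e₀` -/
lemma sum_split (G : WGraph S R) (e₀ : G.E) (F : Finset G.E → R) :
    ∑ A : Finset G.E, F A =
      (∑ A : Finset {e : G.E // e ≠ e₀},
        F (A.map (Function.Embedding.subtype _))) +
      ∑ A : Finset {e : G.E // e ≠ e₀},
        F (insert e₀ (A.map (Function.Embedding.subtype _))) := by
  have key : ∀ Fn : Finset G.E → R,
      ∑ t ∈ ((univ : Finset G.E).erase e₀).powerset, Fn t =
        ∑ A : Finset {e : G.E // e ≠ e₀}, Fn (A.map (Function.Embedding.subtype _)) := by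
    intro Fn
    symm
    refine Finset.sum_nbij' (fun A => A.map (Function.Embedding.subtype _))
      (fun t => t.subtype (· ≠ e₀)) ?_ ?_ ?_ ?_ ?_
    · intro A _
      rw [Finset.mem_powerset]
      intro e he
      rcases Finset.mem_map.mp he with ⟨e', _, rfl⟩
      exact Finset.mem_erase.mpr ⟨e'.2, mem_univ _⟩
    · intro t _; exact mem_univ _
    · intro A _
      ext e'
      simp only [Finset.mem_subtype, Finset.mem_map, Function.Embedding.coe_subtype]
      constructor
      · rintro ⟨a, ha, hav⟩
        rwa [Subtype.ext hav.symm]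
      · intro h'
        exact ⟨e', h', rfl⟩
    · intro t ht
      rw [Finset.mem_powerset] at ht
      exact Finset.subtype_map_of_mem (fun e he => (Finset.mem_erase.mp (ht he)).1)
    · intro A _; rfl
  calc ∑ A : Finset G.E, F A
      = ∑ A ∈ (univ : Finset G.E).powerset, F A := by rw [Finset.powerset_univ]
    _ = ∑ A ∈ (insert e₀ ((univ : Finset G.E).erase e₀)).powerset, F A := by
        rw [Finset.insert_erase (mem_univ e₀)]
    _ = (∑ t ∈ ((univ : Finset G.E).erase e₀).powerset, F t) +
          ∑ t ∈ ((univ : Finset G.E).erase e₀).powerset, F (insert e₀ t) :=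
        Finset.sum_powerset_insert (Finset.notMem_erase _ _) F
    _ = _ := by rw [key F, key (fun t => F (insert e₀ t))]

lemma stateGraph_delete (G : WGraph S R) (e₀ : G.E) (A : Finset (G.delete e₀).E) :
    (G.delete e₀).stateGraph A =
      G.stateGraph (A.map (Function.Embedding.subtype _)) := by
  ext v w
  simp only [WGraph.stateGraph, SimpleGraph.fromRel_adj, Finset.mem_map,
    Function.Embedding.coe_subtype, WGraph.delete]
  constructor
  · rintro ⟨hvw, h | h⟩ <;> [skip; skip] <;>
      · obtain ⟨e, he, hee⟩ := h
        first
          | exact ⟨hvw, Or.inl ⟨e.1, Finset.mem_map.mpr ⟨e, he, rfl⟩, hee⟩⟩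
          | exact ⟨hvw, Or.inr ⟨e.1, Finset.mem_map.mpr ⟨e, he, rfl⟩, hee⟩⟩
  · rintro ⟨hvw, h | h⟩ <;>
      · obtain ⟨e, he0, hee⟩ := h
        obtain ⟨e', he', rfl⟩ := Finset.mem_map.mp he0
        first
          | exact ⟨hvw, Or.inl ⟨e', he', hee⟩⟩
          | exact ⟨hvw, Or.inr ⟨e', he', hee⟩⟩

lemma stateGraph_insert_loop (G : WGraph S R) (e₀ : G.E) (hl : G.IsLoop e₀)
    (t : Finset G.E) :
    G.stateGraph (insert e₀ t) = G.stateGraph t := by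
  have hl' : G.ends e₀ = ((G.ends e₀).1, (G.ends e₀).1) := by
    rw [WGraph.IsLoop] at hl
    exact Prod.ext rfl hl.symm
  ext v w
  simp only [WGraph.stateGraph, SimpleGraph.fromRel_adj, Finset.mem_insert]
  constructor
  · rintro ⟨hvw, h | h⟩ <;>
      · obtain ⟨e, he | he, hee⟩ := h
        · exfalso; subst he; rw [hl'] at hee
          cases hee
          exact hvw rfl
        · first
            | exact ⟨hvw, Or.inl ⟨e, he, hee⟩⟩
            | exact ⟨hvw, Or.inr ⟨e, he, hee⟩⟩
  · rintro ⟨hvw, h | h⟩ <;>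
      · obtain ⟨e, he, hee⟩ := h
        first
          | exact ⟨hvw, Or.inl ⟨e, Or.inr he, hee⟩⟩
          | exact ⟨hvw, Or.inr ⟨e, Or.inr he, hee⟩⟩

end Aux

/- ---------------- contract correspondence ---------------- -/

section Contract
variable {S : Type} [AddCommMonoid S] {R : Type} [CommRing R]

/-- projection of vertices of `G` to vertices of `G.contract e₀ h` -/
def cproj (G : WGraph S R) (e₀ : G.E) (h : ¬ G.IsLoop e₀) (v : G.V) :
    (G.contract e₀ h).V :=
  if hv : v = (G.ends e₀).2 then ⟨(G.ends e₀).1, h⟩ else ⟨v, hv⟩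

lemma hends (G : WGraph S R) (e₀ : G.E) (h : ¬ G.IsLoop e₀)
    (e' : (G.contract e₀ h).E) :
    (G.contract e₀ h).ends e' =
      (cproj G e₀ h (G.ends e'.1).1, cproj G e₀ h (G.ends e'.1).2) := rfl

lemma cmem (G : WGraph S R) (e₀ : G.E) (A : Finset {e : G.E // e ≠ e₀}) :
    e₀ ∉ A.map (Function.Embedding.subtype (· ≠ e₀)) := by
  intro hmem
  rcases Finset.mem_map.mp hmem with ⟨e', _, he⟩
  exact e'.2 he

lemma reach_cproj (G : WGraph S R) (e₀ : G.E) (h : ¬ G.IsLoop e₀)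
    (A : Finset {e : G.E // e ≠ e₀}) (v : G.V) :
    (G.stateGraph (insert e₀ (A.map (Function.Embedding.subtype _)))).Reachable
      (Subtype.val (cproj G e₀ h v)) v := by
  by_cases hv : v = (G.ends e₀).2
  · subst hv
    have hadj : (G.stateGraph
        (insert e₀ (A.map (Function.Embedding.subtype _)))).Adj
        (G.ends e₀).1 (G.ends e₀).2 := by
      rw [WGraph.stateGraph, SimpleGraph.fromRel_adj]
      exact ⟨h, Or.inl ⟨e₀, Finset.mem_insert_self _ _, rfl⟩⟩
    have hc : cproj G e₀ h (G.ends e₀).2 = ⟨(G.ends e₀).1, h⟩ := dif_pos rfl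
    rw [hc]
    exact hadj.reachable
  · have hc : cproj G e₀ h v = ⟨v, hv⟩ := dif_neg hv
    rw [hc]

lemma reach_of_mem_B (G : WGraph S R) (e₀ : G.E)
    (A : Finset {e : G.E // e ≠ e₀}) {a b : G.V} (e : G.E)
    (he : e ∈ insert e₀ (A.map (Function.Embedding.subtype (· ≠ e₀))))
    (hab : G.ends e = (a, b)) :
    (G.stateGraph (insert e₀ (A.map (Function.Embedding.subtype _)))).Reachable a b := by
  by_cases hab' : a = b
  · subst hab'; exact SimpleGraph.Reachable.refl a
  · refine SimpleGraph.Adj.reachable ?_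
    rw [WGraph.stateGraph, SimpleGraph.fromRel_adj]
    exact ⟨hab', Or.inl ⟨e, he, hab⟩⟩

lemma hf_contract (G : WGraph S R) (e₀ : G.E) (h : ¬ G.IsLoop e₀)
    (A : Finset {e : G.E // e ≠ e₀}) : ∀ v w : G.V,
    (G.stateGraph (insert e₀ (A.map (Function.Embedding.subtype _)))).Adj v w →
    ((G.contract e₀ h).stateGraph A).Reachable (cproj G e₀ h v) (cproj G e₀ h w) := by
  intro v w hvw
  rw [WGraph.stateGraph, SimpleGraph.fromRel_adj] at hvw
  obtain ⟨hne, hrel⟩ := hvw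
  suffices key : ∀ a b : G.V,
      (∃ e ∈ insert e₀ (A.map (Function.Embedding.subtype (· ≠ e₀))), G.ends e = (a, b)) →
      ((G.contract e₀ h).stateGraph A).Reachable (cproj G e₀ h a) (cproj G e₀ h b) by
    rcases hrel with hr | hr
    · exact key v w hr
    · exact (key w v hr).symm
  rintro a b ⟨e, he, hab⟩
  rcases Finset.mem_insert.mp he with heq | he'
  · subst heq
    have ha : (G.ends e).1 = a := by rw [hab]
    have hb : (G.ends e).2 = b := by rw [hab]
    have h' : ¬ ((G.ends e).1 = (G.ends e).2) := h
    have hkey : cproj G e h (G.ends e).1 = cproj G e h (G.ends e).2 := by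
      have k1 : cproj G e h (G.ends e).1 = ⟨(G.ends e).1, h'⟩ := dif_neg h'
      have k2 : cproj G e h (G.ends e).2 = ⟨(G.ends e).1, h⟩ := dif_pos rfl
      rw [k1, k2]
    rw [← ha, ← hb, hkey]
  · obtain ⟨e', he'A, rfl⟩ := Finset.mem_map.mp he'
    have hab' : G.ends e'.1 = (a, b) := hab
    by_cases hcc : cproj G e₀ h a = cproj G e₀ h b
    · rw [hcc]
    · refine SimpleGraph.Adj.reachable ?_
      apply (SimpleGraph.fromRel_adj _ _ _).mpr
      refine ⟨hcc, Or.inl ⟨e', he'A, ?_⟩⟩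
      rw [hends G e₀ h e', hab']

lemma hfg_contract (G : WGraph S R) (e₀ : G.E) (h : ¬ G.IsLoop e₀)
    (v' : (G.contract e₀ h).V) : cproj G e₀ h v'.1 = v' := by
  have k : cproj G e₀ h v'.1 = ⟨v'.1, v'.2⟩ := dif_neg v'.2
  refine k.trans ?_
  exact Subtype.ext rfl

lemma hg_contract (G : WGraph S R) (e₀ : G.E) (h : ¬ G.IsLoop e₀)
    (A : Finset {e : G.E // e ≠ e₀}) : ∀ v' w' : (G.contract e₀ h).V,
    ((G.contract e₀ h).stateGraph A).Adj v' w' →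
    (G.stateGraph (insert e₀ (A.map (Function.Embedding.subtype _)))).Reachable
      (Subtype.val v') (Subtype.val w') := by
  intro v' w' hvw
  replace hvw := (SimpleGraph.fromRel_adj _ _ _).mp hvw
  obtain ⟨hne, hrel⟩ := hvw
  suffices key : ∀ a b : (G.contract e₀ h).V,
      (∃ e ∈ A, (G.contract e₀ h).ends e = (a, b)) →
      (G.stateGraph (insert e₀ (A.map (Function.Embedding.subtype (· ≠ e₀))))).Reachable
        (Subtype.val a) (Subtype.val b) by
    rcases hrel with hr | hr
    · exact key _ _ hr
    · exact (key _ _ hr).symm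
  rintro a b ⟨e', he', hab⟩
  rw [hends G e₀ h e'] at hab
  have ha : cproj G e₀ h (G.ends e'.1).1 = a := congrArg Prod.fst hab
  have hb : cproj G e₀ h (G.ends e'.1).2 = b := congrArg Prod.snd hab
  have r1 : (G.stateGraph (insert e₀ (A.map (Function.Embedding.subtype (· ≠ e₀))))).Reachable
      (Subtype.val a) (G.ends e'.1).1 := by
    rw [← ha]; exact reach_cproj G e₀ h A _
  have r2 : (G.stateGraph (insert e₀ (A.map (Function.Embedding.subtype (· ≠ e₀))))).Reachable
      (G.ends e'.1).1 (G.ends e'.1).2 :=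
    reach_of_mem_B G e₀ A e'.1
      (Finset.mem_insert_of_mem (Finset.mem_map_of_mem _ he')) rfl
  have r3 : (G.stateGraph (insert e₀ (A.map (Function.Embedding.subtype (· ≠ e₀))))).Reachable
      (G.ends e'.1).2 (Subtype.val b) := by
    rw [← hb]; exact (reach_cproj G e₀ h A _).symm
  exact (r1.trans r2).trans r3

end Contract

/- ---------------- weights ---------------- -/

section Weights
variable {S : Type} [AddCommMonoid S] {R : Type} [CommRing R]

lemma sum_erase_trick {α : Type} [DecidableEq α] (T : Finset α) (ω : α → S)
    (v₁ v₂ : α) (hne : v₁ ≠ v₂) (hiff : v₁ ∈ T ↔ v₂ ∈ T) :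
    ∑ u ∈ T, ω u = ∑ u ∈ T.erase v₂, (if u = v₁ then ω v₁ + ω v₂ else ω u) := by
  by_cases hv₂ : v₂ ∈ T
  · have hv₁e : v₁ ∈ T.erase v₂ := Finset.mem_erase.mpr ⟨hne, hiff.mpr hv₂⟩
    have hcongr : ∑ u ∈ (T.erase v₂).erase v₁, (if u = v₁ then ω v₁ + ω v₂ else ω u)
        = ∑ u ∈ (T.erase v₂).erase v₁, ω u :=
      Finset.sum_congr rfl (fun u hu => if_neg (Finset.mem_erase.mp hu).1)
    calc ∑ u ∈ T, ω u
        = ω v₂ + ∑ u ∈ T.erase v₂, ω u := (Finset.add_sum_erase _ ω hv₂).symm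
      _ = ω v₂ + (ω v₁ + ∑ u ∈ (T.erase v₂).erase v₁, ω u) := by
          rw [Finset.add_sum_erase _ ω hv₁e]
      _ = (if v₁ = v₁ then ω v₁ + ω v₂ else ω v₁) +
            ∑ u ∈ (T.erase v₂).erase v₁, (if u = v₁ then ω v₁ + ω v₂ else ω u) := by
          rw [if_pos rfl, hcongr]
          abel
      _ = ∑ u ∈ T.erase v₂, (if u = v₁ then ω v₁ + ω v₂ else ω u) :=
          Finset.add_sum_erase _ (fun u => if u = v₁ then ω v₁ + ω v₂ else ω u) hv₁e
  · rw [Finset.erase_eq_of_notMem hv₂]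
    refine Finset.sum_congr rfl (fun u hu => ?_)
    have : u ≠ v₁ := fun he => hv₂ (hiff.mp (he ▸ hu))
    rw [if_neg this]

lemma wsum_contract (G : WGraph S R) (e₀ : G.E) (h : ¬ G.IsLoop e₀)
    (A : Finset {e : G.E // e ≠ e₀}) (v : G.V) :
    wsum (G.stateGraph (insert e₀ (A.map (Function.Embedding.subtype _)))) G.ω
      ((G.stateGraph (insert e₀ (A.map (Function.Embedding.subtype _)))).connectedComponentMk v)
    = wsum ((G.contract e₀ h).stateGraph A) (G.contract e₀ h).ω
      (((G.contract e₀ h).stateGraph A).connectedComponentMk (cproj G e₀ h v)) := by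
  classical
  have hmem : ∀ w' : (G.contract e₀ h).V,
      ((G.contract e₀ h).stateGraph A).connectedComponentMk w' =
        ((G.contract e₀ h).stateGraph A).connectedComponentMk (cproj G e₀ h v) ↔
      (G.stateGraph (insert e₀ (A.map (Function.Embedding.subtype _)))).connectedComponentMk
        (Subtype.val w') =
      (G.stateGraph (insert e₀ (A.map (Function.Embedding.subtype _)))).connectedComponentMk v := by
    intro w'
    constructor
    · intro hw
      have h1 := mk_eq_of_reachable (hg_contract G e₀ h A)
        (SimpleGraph.ConnectedComponent.exact hw)
      have h2 := SimpleGraph.ConnectedComponent.sound (reach_cproj G e₀ h A v)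
      exact h1.trans h2
    · intro hw
      have h1 := mk_eq_of_reachable (hf_contract G e₀ h A)
        (SimpleGraph.ConnectedComponent.exact hw)
      rwa [hfg_contract G e₀ h w'] at h1
  simp only [wsum]
  have hstep : ∑ w' ∈ Finset.univ.filter (fun w' : (G.contract e₀ h).V =>
        ((G.contract e₀ h).stateGraph A).connectedComponentMk w' =
        ((G.contract e₀ h).stateGraph A).connectedComponentMk (cproj G e₀ h v)),
        (G.contract e₀ h).ω w'
      = ∑ u ∈ (Finset.univ.filter (fun u : G.V =>
          (G.stateGraph (insert e₀ (A.map (Function.Embedding.subtype _)))).connectedComponentMk u =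
          (G.stateGraph (insert e₀ (A.map (Function.Embedding.subtype _)))).connectedComponentMk v)).erase
            (G.ends e₀).2,
        (if u = (G.ends e₀).1 then G.ω (G.ends e₀).1 + G.ω (G.ends e₀).2 else G.ω u) := by
    refine Finset.sum_bij' (fun w' _ => w'.1)
      (fun u hu => ⟨u, (Finset.mem_erase.mp hu).1⟩) ?_ ?_ ?_ ?_ ?_
    · intro w' hw'
      rw [Finset.mem_filter] at hw'
      exact Finset.mem_erase.mpr ⟨w'.2,
        Finset.mem_filter.mpr ⟨Finset.mem_univ _, (hmem w').mp hw'.2⟩⟩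
    · intro u hu
      refine Finset.mem_filter.mpr ⟨Finset.mem_univ _, (hmem _).mpr ?_⟩
      exact (Finset.mem_filter.mp (Finset.mem_erase.mp hu).2).2
    · intro w' _; exact Subtype.ext rfl
    · intro u _; rfl
    · intro w' _; rfl
  rw [hstep]
  refine sum_erase_trick _ G.ω (G.ends e₀).1 (G.ends e₀).2 h ?_
  have hadj : (G.stateGraph (insert e₀ (A.map (Function.Embedding.subtype _)))).Adj
      (G.ends e₀).1 (G.ends e₀).2 := by
    rw [WGraph.stateGraph, SimpleGraph.fromRel_adj]
    exact ⟨h, Or.inl ⟨e₀, Finset.mem_insert_self _ _, rfl⟩⟩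
  have hmk12 := SimpleGraph.ConnectedComponent.sound hadj.reachable
  simp only [Finset.mem_filter, Finset.mem_univ, true_and]
  rw [hmk12]

end Weights

/- ---------------- term lemmas ---------------- -/

section Terms
variable {S : Type} [AddCommMonoid S] {R : Type} [CommRing R]

lemma delete_term (G : WGraph S R) (e₀ : G.E) (x : S → R)
    (A : Finset {e : G.E // e ≠ e₀}) :
    (∏ c : (G.stateGraph (A.map (Function.Embedding.subtype _))).ConnectedComponent,
        x (G.compWeight (A.map (Function.Embedding.subtype _)) c)) *
      ∏ e ∈ A.map (Function.Embedding.subtype _), G.γ e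
    = (∏ c : ((G.delete e₀).stateGraph A).ConnectedComponent,
        x ((G.delete e₀).compWeight A c)) *
      ∏ e ∈ A, (G.delete e₀).γ e := by
  have h1 : (∏ c : (G.stateGraph (A.map (Function.Embedding.subtype _))).ConnectedComponent,
        x (G.compWeight (A.map (Function.Embedding.subtype _)) c))
      = ∏ c : ((G.delete e₀).stateGraph A).ConnectedComponent,
        x ((G.delete e₀).compWeight A c) := by
    simp only [compWeight_eq_wsum]
    exact (prod_wsum_congr ((G.delete e₀).stateGraph A)
      (G.stateGraph (A.map (Function.Embedding.subtype (· ≠ e₀)))) (i2 := G.instFintypeConnectedComponentVStateGraph _) G.ω x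
      (stateGraph_delete G e₀ A)).symm
  rw [h1, Finset.prod_map]
  rfl

lemma loop_term (G : WGraph S R) (e₀ : G.E) (hl : G.IsLoop e₀) (x : S → R)
    (t : Finset G.E) (ht : e₀ ∉ t) :
    (∏ c : (G.stateGraph (insert e₀ t)).ConnectedComponent,
        x (G.compWeight (insert e₀ t) c)) * ∏ e ∈ insert e₀ t, G.γ e
    = G.γ e₀ * ((∏ c : (G.stateGraph t).ConnectedComponent,
        x (G.compWeight t c)) * ∏ e ∈ t, G.γ e) := by
  have h1 : (∏ c : (G.stateGraph (insert e₀ t)).ConnectedComponent,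
        x (G.compWeight (insert e₀ t) c))
      = ∏ c : (G.stateGraph t).ConnectedComponent, x (G.compWeight t c) := by
    simp only [compWeight_eq_wsum]
    exact prod_wsum_congr _ _ G.ω x (stateGraph_insert_loop G e₀ hl t)
  rw [h1, Finset.prod_insert ht]
  ring

lemma contract_term (G : WGraph S R) (e₀ : G.E) (h : ¬ G.IsLoop e₀) (x : S → R)
    (A : Finset {e : G.E // e ≠ e₀}) :
    (∏ c : (G.stateGraph (insert e₀
          (A.map (Function.Embedding.subtype _)))).ConnectedComponent,
        x (G.compWeight (insert e₀ (A.map (Function.Embedding.subtype _))) c)) *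
      ∏ e ∈ insert e₀ (A.map (Function.Embedding.subtype _)), G.γ e
    = G.γ e₀ * ((∏ c : ((G.contract e₀ h).stateGraph A).ConnectedComponent,
        x ((G.contract e₀ h).compWeight A c)) * ∏ e ∈ A, (G.contract e₀ h).γ e) := by
  have h1 : (∏ c : (G.stateGraph (insert e₀
          (A.map (Function.Embedding.subtype _)))).ConnectedComponent,
        x (G.compWeight (insert e₀ (A.map (Function.Embedding.subtype _))) c))
      = ∏ c : ((G.contract e₀ h).stateGraph A).ConnectedComponent,
        x ((G.contract e₀ h).compWeight A c) := by
    simp only [compWeight_eq_wsum]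
    exact prod_wsum_transfer _ _ G.ω (G.contract e₀ h).ω x
      (cproj G e₀ h) Subtype.val
      (hf_contract G e₀ h A) (hg_contract G e₀ h A)
      (reach_cproj G e₀ h A)
      (fun v' => by rw [hfg_contract G e₀ h v'])
      (wsum_contract G e₀ h A)
  rw [h1, Finset.prod_insert (cmem G e₀ A), Finset.prod_map]
  ring_nf
  rfl

end Terms

/- ---------------- main theorem ---------------- -/

/-- the V-polynomial has a spanning-subgraph state-sum expansion. -/
theorem V_polynomial_state_sum {S : Type} [AddCommMonoid S] {R : Type} [CommRing R]
    (x : S → R) (Vpoly : WGraph S R → R)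
    (hV1 : ∀ (G : WGraph S R) (e : G.E) (h : ¬ G.IsLoop e),
      Vpoly G = Vpoly (G.delete e) + G.γ e * Vpoly (G.contract e h))
    (hV2 : ∀ (G : WGraph S R) (e : G.E), G.IsLoop e →
      Vpoly G = (G.γ e + 1) * Vpoly (G.delete e))
    (hV3 : ∀ G : WGraph S R, IsEmpty G.E → Vpoly G = ∏ v : G.V, x (G.ω v)) :
    ∀ G : WGraph S R,
      Vpoly G = ∑ A : Finset G.E,
        (∏ c : (G.stateGraph A).ConnectedComponent, x (G.compWeight A c)) *
          ∏ e ∈ A, G.γ e := by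
  suffices Hmain : ∀ n : ℕ, ∀ G : WGraph S R, Fintype.card G.E = n →
      Vpoly G = ∑ A : Finset G.E,
        (∏ c : (G.stateGraph A).ConnectedComponent, x (G.compWeight A c)) *
          ∏ e ∈ A, G.γ e by
    exact fun G => Hmain _ G rfl
  intro n
  induction n using Nat.strong_induction_on with
  | _ n IH =>
    intro G hn
    classical
    by_cases hE : IsEmpty G.E
    · -- base case: no edges
      have huniv : (Finset.univ : Finset (Finset G.E)) = {∅} := by
        refine Finset.eq_singleton_iff_unique_mem.mpr ⟨Finset.mem_univ _, fun A _ => ?_⟩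
        exact Finset.eq_empty_of_forall_notMem fun e _ => hE.false e
      rw [hV3 G hE, huniv, Finset.sum_singleton, Finset.prod_empty, mul_one]
      have hreach : ∀ u w : G.V, (G.stateGraph (∅ : Finset G.E)).Reachable u w → u = w := by
        intro u w hr
        obtain ⟨p⟩ := hr
        cases p with
        | nil => rfl
        | cons ha _ =>
          exfalso
          rw [WGraph.stateGraph, SimpleGraph.fromRel_adj] at ha
          rcases ha.2 with ⟨e, _, _⟩ | ⟨e, _, _⟩ <;> exact hE.false e
      refine Fintype.prod_bijective (G.stateGraph (∅ : Finset G.E)).connectedComponentMk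
        ⟨?_, ?_⟩ _ _ ?_
      · exact fun a b hab => hreach a b (SimpleGraph.ConnectedComponent.exact hab)
      · exact SimpleGraph.ConnectedComponent.ind (fun w => ⟨w, rfl⟩)
      · intro u
        congr 1
        rw [WGraph.compWeight]
        have hfil : Finset.univ.filter (fun w : G.V =>
            (G.stateGraph (∅ : Finset G.E)).connectedComponentMk w =
            (G.stateGraph (∅ : Finset G.E)).connectedComponentMk u) = {u} := by
          ext w
          simp only [Finset.mem_filter, Finset.mem_univ, true_and, Finset.mem_singleton]
          exact ⟨fun hw => hreach w u (SimpleGraph.ConnectedComponent.exact hw),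
            fun hw => by rw [hw]⟩
        rw [hfil, Finset.sum_singleton]
    · -- inductive step
      obtain ⟨e₀⟩ := not_isEmpty_iff.mp hE
      have hcard : Fintype.card {e : G.E // e ≠ e₀} < n := by
        rw [← hn]
        exact Fintype.card_subtype_lt (x := e₀) (by simp)
      by_cases hl : G.IsLoop e₀
      · -- loop case
        rw [hV2 G e₀ hl, IH _ hcard (G.delete e₀) (Fintype.card_congr (Equiv.refl _)),
          sum_split G e₀]
        have e1 : ∑ A : Finset (G.delete e₀).E,
            (∏ c : ((G.delete e₀).stateGraph A).ConnectedComponent,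
              x ((G.delete e₀).compWeight A c)) * ∏ e ∈ A, (G.delete e₀).γ e
            = ∑ A : Finset {e : G.E // e ≠ e₀},
            (∏ c : (G.stateGraph (A.map (Function.Embedding.subtype _))).ConnectedComponent,
              x (G.compWeight (A.map (Function.Embedding.subtype _)) c)) *
              ∏ e ∈ A.map (Function.Embedding.subtype _), G.γ e :=
          Finset.sum_congr rfl (fun A _ => by convert (delete_term G e₀ x A).symm <;> rfl)
        have e2 : ∑ A : Finset {e : G.E // e ≠ e₀},
            (∏ c : (G.stateGraph (insert e₀
                (A.map (Function.Embedding.subtype _)))).ConnectedComponent,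
              x (G.compWeight (insert e₀ (A.map (Function.Embedding.subtype _))) c)) *
              ∏ e ∈ insert e₀ (A.map (Function.Embedding.subtype _)), G.γ e
            = ∑ A : Finset {e : G.E // e ≠ e₀}, G.γ e₀ *
            ((∏ c : (G.stateGraph (A.map (Function.Embedding.subtype _))).ConnectedComponent,
              x (G.compWeight (A.map (Function.Embedding.subtype _)) c)) *
              ∏ e ∈ A.map (Function.Embedding.subtype _), G.γ e) :=
          Finset.sum_congr rfl (fun A _ => loop_term G e₀ hl x _ (cmem G e₀ A))
        rw [e1, e2, ← Finset.mul_sum]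
        ring
      · -- non-loop case
        rw [hV1 G e₀ hl, IH _ hcard (G.delete e₀) (Fintype.card_congr (Equiv.refl _)),
          IH _ hcard (G.contract e₀ hl) (Fintype.card_congr (Equiv.refl _)),
          sum_split G e₀, Finset.mul_sum]
        congr 1
        · exact Finset.sum_congr rfl (fun A _ => by convert (delete_term G e₀ x A).symm <;> rfl)
        · exact Finset.sum_congr rfl (fun A _ => by convert (contract_term G e₀ hl x A).symm <;> rfl)
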